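/- Let f, g : Ω → ℝ with f ≤ g, x interior to Ω, and suppose the Markov left derivative of F(t) = [f(t), g(t)] exists at x. Suppose there exist α, β, c, d : Ω → ℝ and μ > 0 such that: α·f + β·g = c + d on Ω ∩ (-∞, x); α, β, c are continuous on Ω ∩ (-∞, x); |α(t)| + |β(t)| ≤ μ and μ·|α(t) - β(t)| ≥ 1 for all t ∈ Ω; d(x) = 0 and the left derivative d'₋(x) = 0. Then the left derivatives f'₋(x) and g'₋(x) exist. -/

import Mathlib

open Set Filter Topology

theorem stmt8 (Ω : Set ℝ) (f g α β c d : ℝ → ℝ) (x μ : ℝ) (hx : x ∈ interior Ω)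
    (hfg : ∀ t ∈ Ω, f t ≤ g t) (hμ : 0 < μ)
    (hmin : ∃ L₁ : ℝ, Tendsto (fun t => min (f t - f x) (g t - g x) / (t - x))
      (𝓝[Ω ∩ Set.Iio x] x) (𝓝 L₁))
    (hmax : ∃ L₂ : ℝ, Tendsto (fun t => max (f t - f x) (g t - g x) / (t - x))
      (𝓝[Ω ∩ Set.Iio x] x) (𝓝 L₂))
    (heq : ∀ t ∈ Ω ∩ Set.Iio x, α t * f t + β t * g t = c t + d t)
    (hα : ContinuousOn α (Ω ∩ Set.Iio x)) (hβ : ContinuousOn β (Ω ∩ Set.Iio x))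
    (hc : ContinuousOn c (Ω ∩ Set.Iio x))
    (hμ1 : ∀ t ∈ Ω, |α t| + |β t| ≤ μ)
    (hμ2 : ∀ t ∈ Ω, 1 ≤ μ * |α t - β t|)
    (hdx : d x = 0)
    (hd' : Tendsto (fun t => (d t - d x) / (t - x)) (𝓝[Ω ∩ Set.Iio x] x) (𝓝 0)) :
    (∃ L : ℝ, Tendsto (fun t => (f t - f x) / (t - x)) (𝓝[Ω ∩ Set.Iio x] x) (𝓝 L)) ∧
    (∃ L : ℝ, Tendsto (fun t => (g t - g x) / (t - x)) (𝓝[Ω ∩ Set.Iio x] x) (𝓝 L)) := by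
  obtain ⟨L₁, h₁⟩ := hmin
  obtain ⟨L₂, h₂⟩ := hmax
  obtain ⟨δ, hδ, hball⟩ := Metric.mem_nhds_iff.mp (mem_interior_iff_mem_nhds.mp hx)
  have hIoo : Ioo (x - δ) (x + δ) ⊆ Ω := by
    rw [← Real.ball_eq_Ioo]; exact hball
  have hfil : 𝓝[Ω ∩ Set.Iio x] x = 𝓝[Ioo (x - δ) x] x := by
    apply nhdsWithin_eq_nhdsWithin' (Ioo_mem_nhds (by linarith) (by linarith) :
      Ioo (x-δ) (x+δ) ∈ 𝓝 x)
    ext t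
    simp only [mem_inter_iff, mem_Ioo, mem_Iio]
    constructor
    · rintro ⟨⟨_, ht⟩, h1, h2⟩; exact ⟨⟨h1, ht⟩, h1, h2⟩
    · rintro ⟨⟨h1, h2⟩, _⟩
      exact ⟨⟨hIoo ⟨h1, by linarith⟩, h2⟩, h1, by linarith⟩
  set l : Filter ℝ := 𝓝[Ioo (x - δ) x] x with hl
  have hne : l.NeBot := by
    rw [hl, ← mem_closure_iff_nhdsWithin_neBot, closure_Ioo (by linarith : x - δ ≠ x)]
    exact ⟨by linarith, le_refl x⟩
  rw [hfil] at h₁ h₂ hd'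
  have hmemΩ : ∀ t ∈ Ioo (x - δ) x, t ∈ Ω ∩ Set.Iio x := fun t ht =>
    ⟨hIoo ⟨ht.1, by have := ht.2; linarith⟩, ht.2⟩
  have hev : ∀ᶠ t in l, t ∈ Ioo (x - δ) x := eventually_mem_nhdsWithin
  -- sum of quotients
  set S : ℝ := L₁ + L₂ with hS
  set q : ℝ → ℝ := fun t => ((f t + g t) - (f x + g x)) / (t - x) with hqdef
  have hq : Tendsto q l (𝓝 S) := by
    refine (h₁.add h₂).congr fun t => ?_
    rw [← add_div]
    congr 1
    rw [min_add_max]; ring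
  -- |r| → ℓ
  set r : ℝ → ℝ := fun t => ((f t - g t) - (f x - g x)) / (t - x) with hrdef
  set ℓ : ℝ := L₁ - L₂ with hℓdef
  have habs : Tendsto (fun t => |r t|) l (𝓝 ℓ) := by
    refine (h₁.sub h₂).congr' ?_
    filter_upwards [hev] with t ht
    have htx : t - x < 0 := by have := ht.2; linarith
    have hnum : (f t - f x) - (g t - g x) = (f t - g t) - (f x - g x) := by ring
    have h1 : min (f t - f x) (g t - g x) - max (f t - f x) (g t - g x)
        = -|(f t - g t) - (f x - g x)| := by
      rw [← hnum, ← max_sub_min_eq_abs' (f t - f x) (g t - g x)]; ring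
    show _ = |((f t - g t) - (f x - g x)) / (t - x)|
    rw [div_sub_div_same, h1, abs_div, abs_of_neg htx, div_neg, neg_div]
  haveI := hne
  have hℓ0 : 0 ≤ ℓ := ge_of_tendsto' habs fun t => abs_nonneg _
  have hd0 : Tendsto (fun t => d t / (t - x)) l (𝓝 0) := by
    refine hd'.congr fun t => ?_
    rw [hdx, sub_zero]
  set G : ℝ → ℝ := fun t =>
      (2 * (c t - α t * f x - β t * g x) - (α t + β t) * (t - x) * S) /
      ((α t - β t) * (t - x)) with hGdef
  have hrG : Tendsto (fun t => r t - G t) l (𝓝 0) := by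
    have hb : Tendsto (fun t => 2 * μ * |d t / (t - x)| + μ ^ 2 * |q t - S|) l (𝓝 0) := by
      have h := (hd0.abs.const_mul (2 * μ)).add ((hq.sub_const S).abs.const_mul (μ ^ 2))
      simpa using h
    refine squeeze_zero_norm' ?_ hb
    filter_upwards [hev] with t ht
    have htΩ := hmemΩ t ht
    have htlt : t < x := ht.2
    have htx : t - x < 0 := by linarith
    have htx' : t - x ≠ 0 := ne_of_lt htx
    have hab : 1 ≤ μ * |α t - β t| := hμ2 t htΩ.1
    have hab0 : α t - β t ≠ 0 := by
      intro h; rw [h, abs_zero, mul_zero] at hab; linarith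
    have hD : (α t - β t) * (t - x) ≠ 0 := mul_ne_zero hab0 htx'
    have heqt := heq t htΩ
    have hr' : r t * (t - x) = (f t - g t) - (f x - g x) := div_mul_cancel₀ _ htx'
    have hq' : q t * (t - x) = (f t + g t) - (f x + g x) := div_mul_cancel₀ _ htx'
    have hG' : G t * ((α t - β t) * (t - x))
        = 2 * (c t - α t * f x - β t * g x) - (α t + β t) * (t - x) * S :=
      div_mul_cancel₀ _ hD
    have hid : r t - G t =
        (2 * d t - (α t + β t) * ((t - x) * (q t - S))) / ((α t - β t) * (t - x)) := by
      rw [eq_div_iff hD]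
      linear_combination (α t - β t) * hr' - hG' + (α t + β t) * hq' + 2 * heqt
    have habμ : |α t + β t| ≤ μ := (abs_add_le _ _).trans (hμ1 t htΩ.1)
    have habinv : (x - t) / μ ≤ |(α t - β t) * (t - x)| := by
      rw [abs_mul, abs_of_neg htx, div_le_iff₀ hμ]
      calc x - t = 1 * (x - t) := by ring
        _ ≤ (μ * |α t - β t|) * (x - t) := by
            apply mul_le_mul_of_nonneg_right hab (by linarith)
        _ = |α t - β t| * -(t - x) * μ := by ring
    have hnumle : |2 * d t - (α t + β t) * ((t - x) * (q t - S))|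
        ≤ 2 * |d t| + μ * ((x - t) * |q t - S|) := by
      calc |2 * d t - (α t + β t) * ((t - x) * (q t - S))|
          ≤ |2 * d t| + |(α t + β t) * ((t - x) * (q t - S))| := abs_sub _ _
        _ = 2 * |d t| + |α t + β t| * (|t - x| * |q t - S|) := by
            rw [abs_mul, abs_mul, abs_mul]; simp [abs_of_pos, abs_two]
        _ ≤ 2 * |d t| + μ * ((x - t) * |q t - S|) := by
            rw [abs_of_neg htx]
            have h1 : |α t + β t| * (-(t - x) * |q t - S|) ≤ μ * (-(t - x) * |q t - S|) :=
              mul_le_mul_of_nonneg_right habμ (mul_nonneg (by linarith) (abs_nonneg _))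
            have h2 : -(t - x) = x - t := by ring
            rw [h2] at h1
            linarith
    rw [Real.norm_eq_abs, hid, abs_div]
    calc |2 * d t - (α t + β t) * ((t - x) * (q t - S))| / |(α t - β t) * (t - x)|
        ≤ (2 * |d t| + μ * ((x - t) * |q t - S|)) / ((x - t) / μ) :=
          div_le_div₀ (add_nonneg (by positivity)
              (mul_nonneg hμ.le (mul_nonneg (by linarith) (abs_nonneg _)))) hnumle
            (div_pos (by linarith) hμ) habinv
      _ = 2 * μ * |d t / (t - x)| + μ ^ 2 * |q t - S| := by
          rw [abs_div, abs_of_neg htx]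
          have hxt : x - t ≠ 0 := by linarith
          field_simp
          ring
  have habsG : Tendsto (fun t => |G t|) l (𝓝 ℓ) := by
    have hlow : Tendsto (fun t => |r t| - |r t - G t|) l (𝓝 ℓ) := by
      have := habs.sub hrG.abs; simpa using this
    have hup : Tendsto (fun t => |r t| + |r t - G t|) l (𝓝 ℓ) := by
      have := habs.add hrG.abs; simpa using this
    refine tendsto_of_tendsto_of_tendsto_of_le_of_le hlow hup ?_ ?_
    · intro t
      have h1 : |r t| - |G t| ≤ |r t - G t| := abs_sub_abs_le_abs_sub _ _
      simp only
      linarith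
    · intro t
      have h1 : |G t| - |r t| ≤ |G t - r t| := abs_sub_abs_le_abs_sub _ _
      rw [abs_sub_comm] at h1
      simp only
      linarith
  have hR : ∃ R : ℝ, Tendsto r l (𝓝 R) := by
    rcases eq_or_lt_of_le hℓ0 with h0 | hpos
    · exact ⟨0, (tendsto_zero_iff_abs_tendsto_zero r).mpr (h0 ▸ habs)⟩
    · -- extract an interval where |G| > ℓ/2
      have hev2 : {t | ℓ / 2 < |G t|} ∈ l :=
        habsG (lt_mem_nhds (show ℓ / 2 < ℓ by linarith))
      rw [hl, Metric.mem_nhdsWithin_iff] at hev2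
      obtain ⟨η, hη, hball2⟩ := hev2
      set δ' : ℝ := min δ η with hδ'def
      have hδ'pos : 0 < δ' := lt_min hδ hη
      set J : Set ℝ := Ioo (x - δ') x with hJdef
      have hJmem : ∀ t ∈ J, t ∈ Metric.ball x η ∩ Ioo (x - δ) x := by
        rintro t ⟨h1, h2⟩
        have hd1 : δ' ≤ δ := min_le_left _ _
        have hd2 : δ' ≤ η := min_le_right _ _
        refine ⟨?_, by constructor <;> linarith⟩
        rw [Metric.mem_ball, Real.dist_eq, abs_of_neg (by linarith : t - x < 0)]
        linarith
      have hJG : ∀ t ∈ J, ℓ / 2 < |G t| := fun t ht => hball2 (hJmem t ht)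
      have hJsub : J ⊆ Ω ∩ Set.Iio x := fun t ht => hmemΩ t (hJmem t ht).2
      have hJl : J ∈ l := by
        rw [hl, Metric.mem_nhdsWithin_iff]
        refine ⟨δ', hδ'pos, ?_⟩
        rintro t ⟨h1, h2⟩
        rw [Metric.mem_ball, Real.dist_eq, abs_of_neg (by have := h2.2; linarith : t - x < 0)] at h1
        exact ⟨by linarith, h2.2⟩
      -- continuity of G on J
      have hαJ := hα.mono hJsub
      have hβJ := hβ.mono hJsub
      have hcJ := hc.mono hJsub
      have hDne : ∀ t ∈ J, (α t - β t) * (t - x) ≠ 0 := by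
        intro t ht
        have htΩ := hJsub ht
        have hab : 1 ≤ μ * |α t - β t| := hμ2 t htΩ.1
        have hab0 : α t - β t ≠ 0 := by
          intro h; rw [h, abs_zero, mul_zero] at hab; linarith
        exact mul_ne_zero hab0 (sub_ne_zero.mpr (ne_of_lt (hJmem t ht).2.2))
      have hGcont : ContinuousOn G J := by
        apply ContinuousOn.div
        · exact (continuousOn_const.mul ((hcJ.sub (hαJ.mul continuousOn_const)).sub
            (hβJ.mul continuousOn_const))).sub
            (((hαJ.add hβJ).mul (continuousOn_id.sub continuousOn_const)).mul continuousOn_const)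
        · exact (hαJ.sub hβJ).mul (continuousOn_id.sub continuousOn_const)
        · exact hDne
      -- sign of G constant on J
      have hsign : (∀ t ∈ J, 0 < G t) ∨ (∀ t ∈ J, G t < 0) := by
        by_contra hcon
        push_neg at hcon
        obtain ⟨⟨t₁, ht₁, hG1⟩, t₂, ht₂, hG2⟩ := hcon
        have hKsub : ∀ u v : ℝ, u ∈ J → v ∈ J → Icc u v ⊆ J := by
          rintro u v ⟨hu1, hu2⟩ ⟨hv1, hv2⟩ w ⟨hw1, hw2⟩
          exact ⟨by linarith, by linarith⟩
        have hzero : ∃ t₀ ∈ J, G t₀ = 0 := by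
          rcases le_total t₁ t₂ with hle | hle
          · have := intermediate_value_Icc hle (hGcont.mono (hKsub _ _ ht₁ ht₂))
            obtain ⟨t₀, ht₀, hGt₀⟩ := this ⟨hG1, hG2⟩
            exact ⟨t₀, hKsub _ _ ht₁ ht₂ ht₀, hGt₀⟩
          · have := intermediate_value_Icc' hle (hGcont.mono (hKsub _ _ ht₂ ht₁))
            obtain ⟨t₀, ht₀, hGt₀⟩ := this ⟨hG1, hG2⟩
            exact ⟨t₀, hKsub _ _ ht₂ ht₁ ht₀, hGt₀⟩
        obtain ⟨t₀, ht₀, hGt₀⟩ := hzero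
        have := hJG t₀ ht₀
        rw [hGt₀, abs_zero] at this
        linarith
      rcases hsign with hpos' | hneg'
      · refine ⟨ℓ, ?_⟩
        have hGl : Tendsto G l (𝓝 ℓ) := by
          refine habsG.congr' ?_
          filter_upwards [hJl] with t ht
          exact abs_of_pos (hpos' t ht)
        have := hGl.add hrG
        rw [add_zero] at this
        refine this.congr fun t => by ring
      · refine ⟨-ℓ, ?_⟩
        have hGl : Tendsto G l (𝓝 (-ℓ)) := by
          have := habsG.neg
          refine this.congr' ?_
          filter_upwards [hJl] with t ht
          rw [abs_of_neg (hneg' t ht), neg_neg]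
        have := hGl.add hrG
        rw [add_zero] at this
        refine this.congr fun t => by ring
  obtain ⟨R, hr⟩ := hR
  constructor
  · refine ⟨(S + R) / 2, ?_⟩
    rw [hfil]
    refine ((hq.add hr).div_const 2).congr' ?_
    filter_upwards [hev] with t ht
    have htx' : t - x ≠ 0 := sub_ne_zero.mpr (ne_of_lt ht.2)
    show (q t + r t) / 2 = _
    rw [hqdef, hrdef]
    field_simp
    ring
  · refine ⟨(S - R) / 2, ?_⟩
    rw [hfil]
    refine ((hq.sub hr).div_const 2).congr' ?_
    filter_upwards [hev] with t ht
    have htx' : t - x ≠ 0 := sub_ne_zero.mpr (ne_of_lt ht.2)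
    show (q t - r t) / 2 = _
    rw [hqdef, hrdef]
    field_simp
    ring
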